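/- Let H be a Hilbert space, L > 0, and f : H → H Lipschitz with constant L and f(0)=0. Let ϱ > L and u₀ ∈ H. Then there is a unique u ∈ H_{ϱ,0}(ℝ; H) satisfying u(t) = χ_{[0,∞)}(t) u₀ + ∫_{-∞}^t f(u(s)) ds for a.e. t ∈ ℝ. Moreover u vanishes a.e. on (-∞,0), u - χ_{[0,∞)}u₀ has a continuous representative, and the continuous representative of u on [0,∞) satisfies u(0+) = u₀. -/

import Mathlib

open MeasureTheory Real Set

/-- Squared weighted norm integrand total: `∫ ‖f t‖² e^{-2ϱt} dt`. -/
noncomputable def wInt (ϱ : ℝ) {H : Type*} [NormedAddCommGroup H] (f : ℝ → H) : ℝ :=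
  ∫ t : ℝ, ‖f t‖ ^ 2 * Real.exp (-2 * ϱ * t)

/-- Membership in the weighted space `H_{ϱ,0}(ℝ; H)`. -/
def memW (ϱ : ℝ) {H : Type*} [NormedAddCommGroup H] (f : ℝ → H) : Prop :=
  AEStronglyMeasurable f volume ∧
    Integrable (fun t : ℝ => ‖f t‖ ^ 2 * Real.exp (-2 * ϱ * t))

/-- The weighted norm `|f|_{ϱ,0}`. -/
noncomputable def wNorm (ϱ : ℝ) {H : Type*} [NormedAddCommGroup H] (f : ℝ → H) : ℝ :=
  Real.sqrt (wInt ϱ f)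


set_option linter.unusedSectionVars false
section AuxStmt14
open Filter intervalIntegral BoundedContinuousFunction

section Aux
variable {H : Type*} [NormedAddCommGroup H] [InnerProductSpace ℂ H] [CompleteSpace H]

lemma contExp (c : ℝ) : Continuous (fun s : ℝ => Real.exp (c * s)) :=
  Real.continuous_exp.comp (continuous_const.mul continuous_id)

lemma intInt_exp (c a b : ℝ) (hc : c ≠ 0) :
    ∫ s in a..b, Real.exp (c * s) = (Real.exp (c * b) - Real.exp (c * a)) / c := by
  have hd : ∀ x : ℝ, HasDerivAt (fun s => Real.exp (c * s) / c) (Real.exp (c * x)) x := by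
    intro x
    have h1 : HasDerivAt (fun s : ℝ => c * s) c x := by
      simpa using (hasDerivAt_id x).const_mul c
    have h2 := (h1.exp).div_const c
    simpa [mul_div_cancel_left₀ _ hc, mul_comm] using h2
  have hint : IntervalIntegrable (fun s => Real.exp (c * s)) volume a b :=
    (contExp c).intervalIntegrable a b
  rw [intervalIntegral.integral_eq_sub_of_hasDerivAt (fun x _ => hd x) hint]; ring

lemma exp_integrableOn_Iic (c t : ℝ) (hc : 0 < c) :
    IntegrableOn (fun s => Real.exp (c * s)) (Iic t) := by
  apply integrableOn_Iic_of_intervalIntegral_norm_bounded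
    (Real.exp (c * t) / c) t (fun i : ℝ => (((contExp c).intervalIntegrable (-i) t).1 : _))
    tendsto_neg_atTop_atBot
  filter_upwards with i
  have h1 : ∀ x, ‖Real.exp (c * x)‖ = Real.exp (c * x) :=
    fun x => Real.norm_of_nonneg (Real.exp_nonneg _)
  simp only [h1]
  rw [intInt_exp c _ _ hc.ne']
  have := Real.exp_nonneg (c * (-i))
  rw [div_le_div_iff_of_pos_right hc]
  linarith

lemma exp_integrableOn_Iio (c t : ℝ) (hc : 0 < c) :
    IntegrableOn (fun s => Real.exp (c * s)) (Iio t) :=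
  (exp_integrableOn_Iic c t hc).mono_set Iio_subset_Iic_self

lemma exp_integral_Iic (c t : ℝ) (hc : 0 < c) :
    ∫ s in Iic t, Real.exp (c * s) = Real.exp (c * t) / c := by
  have hd : ∀ x : ℝ, HasDerivAt (fun s => Real.exp (c * s) / c) (Real.exp (c * x)) x := by
    intro x
    have h1 : HasDerivAt (fun s : ℝ => c * s) c x := by
      simpa using (hasDerivAt_id x).const_mul c
    simpa [mul_div_cancel_left₀ _ hc.ne', mul_comm] using (h1.exp).div_const c
  have htend : Tendsto (fun s => Real.exp (c * s) / c) atBot (nhds 0) := by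
    have h2 : Tendsto (fun s : ℝ => c * s) atBot atBot := tendsto_id.const_mul_atBot hc
    simpa using ((Real.tendsto_exp_atBot.comp h2).div_const c)
  have := integral_Iic_of_hasDerivAt_of_tendsto' (a := t) (fun x _ => hd x)
    (exp_integrableOn_Iic c t hc) htend
  rw [this]; ring

lemma exp_integral_Iio (c t : ℝ) (hc : 0 < c) :
    ∫ s in Iio t, Real.exp (c * s) = Real.exp (c * t) / c := by
  rw [setIntegral_congr_set Iio_ae_eq_Iic]; exact exp_integral_Iic c t hc

lemma key_int_bound {g : ℝ → H} {C σ m : ℝ} (hσ0 : 0 < σ) (hm0 : 0 ≤ m) (hC : 0 ≤ C)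
    (hg : ∀ s, ‖g s‖ ≤ C * Real.exp (σ * s)) :
    ‖∫ s in (0:ℝ)..m, g s‖ ≤ C * ((Real.exp (σ * m) - 1) / σ) := by
  have hb : ∀ᵐ s ∂(volume.restrict (Set.uIoc (0:ℝ) m)), ‖g s‖ ≤ C * Real.exp (σ * s) :=
    ae_restrict_of_ae (ae_of_all _ hg)
  have hgi : IntervalIntegrable (fun s => C * Real.exp (σ * s)) volume 0 m :=
    (continuous_const.mul (contExp σ)).intervalIntegrable 0 m
  have h := intervalIntegral.norm_integral_le_abs_of_norm_le hb hgi
  rw [intervalIntegral.integral_const_mul, intInt_exp σ 0 m hσ0.ne'] at h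
  have hge : (1:ℝ) ≤ Real.exp (σ * m) := by
    rw [← Real.exp_zero]; exact Real.exp_le_exp.2 (by positivity)
  have hnn : 0 ≤ (Real.exp (σ * m) - 1) / σ := div_nonneg (by linarith) hσ0.le
  calc ‖∫ s in (0:ℝ)..m, g s‖ ≤ |C * ((Real.exp (σ * m) - Real.exp (σ * 0)) / σ)| := h
    _ = C * ((Real.exp (σ * m) - 1) / σ) := by
        rw [mul_zero, Real.exp_zero, abs_of_nonneg (mul_nonneg hC hnn)]

end Aux


variable {H : Type*} [NormedAddCommGroup H] [InnerProductSpace ℂ H] [CompleteSpace H]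

lemma exists_fixed (L : ℝ) (hL : 0 < L) (f : H → H)
    (hlip : ∀ x y : H, ‖f x - f y‖ ≤ L * ‖x - y‖) (hf0 : f 0 = 0) (hfc : Continuous f)
    (σ : ℝ) (hσ0 : 0 < σ) (hLσ : L < σ) (u₀ : H) :
    ∃ v : ℝ →ᵇ H, ∀ t : ℝ, v t =
      Real.exp (-(σ * max t 0)) • (u₀ + ∫ s in (0:ℝ)..(max t 0), f (Real.exp (σ * s) • v s)) := by
  set G : (ℝ →ᵇ H) → ℝ → H := fun v t =>
    Real.exp (-(σ * max t 0)) • (u₀ + ∫ s in (0:ℝ)..(max t 0), f (Real.exp (σ * s) • v s))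
    with hG
  have hIntCont : ∀ v : ℝ →ᵇ H, Continuous (fun s => f (Real.exp (σ * s) • v s)) :=
    fun v => hfc.comp ((contExp σ).smul v.continuous)
  have hGcont : ∀ v, Continuous (G v) := by
    intro v
    have hF : Continuous (fun b => ∫ s in (0:ℝ)..b, f (Real.exp (σ * s) • v s)) :=
      intervalIntegral.continuous_primitive (fun a b => (hIntCont v).intervalIntegrable a b) 0
    have hmax : Continuous (fun t : ℝ => max t 0) := continuous_id.max continuous_const
    exact ((Real.continuous_exp.comp ((continuous_const.mul hmax).neg))).smul
      (continuous_const.add (hF.comp hmax))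
  -- generic estimate used for both bound and Lipschitz property
  have hEfact : ∀ m : ℝ, 0 ≤ m → ∀ C : ℝ, 0 ≤ C →
      Real.exp (-(σ * m)) * (C * ((Real.exp (σ * m) - 1) / σ)) ≤ C / σ := by
    intro m hm0 C hC
    have hEX : Real.exp (-(σ * m)) * Real.exp (σ * m) = 1 := by
      rw [← Real.exp_add]; simp
    have h4 : Real.exp (-(σ * m)) * (C * ((Real.exp (σ * m) - 1) / σ))
        = C / σ * (Real.exp (-(σ * m)) * Real.exp (σ * m))
          - C / σ * Real.exp (-(σ * m)) := by ring
    rw [hEX, mul_one] at h4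
    rw [h4]
    have : 0 ≤ C / σ * Real.exp (-(σ * m)) :=
      mul_nonneg (div_nonneg hC hσ0.le) (Real.exp_pos _).le
    linarith
  have hGbound : ∀ (v : ℝ →ᵇ H) (t : ℝ), ‖G v t‖ ≤ ‖u₀‖ + L * ‖v‖ / σ := by
    intro v t
    set m := max t 0 with hm
    have hm0 : 0 ≤ m := le_max_right _ _
    have hpt : ∀ s, ‖f (Real.exp (σ * s) • v s)‖ ≤ L * ‖v‖ * Real.exp (σ * s) := by
      intro s
      have h1 : ‖f (Real.exp (σ * s) • v s)‖ ≤ L * ‖Real.exp (σ * s) • v s‖ := by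
        simpa [hf0] using hlip (Real.exp (σ * s) • v s) 0
      have h2 : ‖Real.exp (σ * s) • v s‖ = Real.exp (σ * s) * ‖v s‖ := by
        rw [norm_smul, Real.norm_eq_abs, abs_of_pos (Real.exp_pos _)]
      have h3 : ‖v s‖ ≤ ‖v‖ := v.norm_coe_le_norm s
      have h5 := mul_le_mul_of_nonneg_right (mul_le_mul_of_nonneg_left h3 hL.le)
        (Real.exp_pos (σ * s)).le
      calc ‖f (Real.exp (σ * s) • v s)‖ ≤ L * (Real.exp (σ * s) * ‖v s‖) := by
            rw [← h2]; exact h1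
        _ = L * ‖v s‖ * Real.exp (σ * s) := by ring
        _ ≤ L * ‖v‖ * Real.exp (σ * s) := h5
    have hIle := key_int_bound (g := fun s => f (Real.exp (σ * s) • v s))
      hσ0 hm0 (mul_nonneg hL.le (norm_nonneg v)) hpt
    have hnorm : ‖G v t‖ = Real.exp (-(σ * m))
        * ‖u₀ + ∫ s in (0:ℝ)..m, f (Real.exp (σ * s) • v s)‖ := by
      rw [hG]; simp only []
      rw [norm_smul, Real.norm_eq_abs, abs_of_pos (Real.exp_pos _)]
    have hE1 : Real.exp (-(σ * m)) ≤ 1 := by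
      rw [← Real.exp_zero]; exact Real.exp_le_exp.2 (by nlinarith)
    have hfin := hEfact m hm0 (L * ‖v‖) (mul_nonneg hL.le (norm_nonneg v))
    calc ‖G v t‖ ≤ Real.exp (-(σ * m)) *
          (‖u₀‖ + L * ‖v‖ * ((Real.exp (σ * m) - 1) / σ)) := by
          rw [hnorm]
          exact mul_le_mul_of_nonneg_left
            ((norm_add_le _ _).trans (by linarith)) (Real.exp_pos _).le
      _ = Real.exp (-(σ * m)) * ‖u₀‖
          + Real.exp (-(σ * m)) * (L * ‖v‖ * ((Real.exp (σ * m) - 1) / σ)) := by ring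
      _ ≤ ‖u₀‖ + L * ‖v‖ / σ := by
          have h6 : Real.exp (-(σ * m)) * ‖u₀‖ ≤ ‖u₀‖ := by
            nlinarith [norm_nonneg u₀, (Real.exp_pos (-(σ * m))).le]
          have h7 := hfin
          linarith
  set Φ : (ℝ →ᵇ H) → (ℝ →ᵇ H) := fun v =>
    BoundedContinuousFunction.ofNormedAddCommGroup (G v) (hGcont v) _ (hGbound v) with hΦ
  have hΦcoe : ∀ v t, (Φ v) t = G v t := fun v t => rfl
  have hlipΦ : ∀ v w : ℝ →ᵇ H, dist (Φ v) (Φ w) ≤ L / σ * dist v w := by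
    intro v w
    apply (BoundedContinuousFunction.dist_le
      (mul_nonneg (div_nonneg hL.le hσ0.le) dist_nonneg)).2
    intro t
    set m := max t 0 with hm
    have hm0 : 0 ≤ m := le_max_right _ _
    rw [dist_eq_norm, hΦcoe, hΦcoe]
    have hsub : G v t - G w t = Real.exp (-(σ * m)) •
        ((∫ s in (0:ℝ)..m, f (Real.exp (σ * s) • v s))
          - ∫ s in (0:ℝ)..m, f (Real.exp (σ * s) • w s)) := by
      rw [hG]; simp only []
      rw [← smul_sub, add_sub_add_left_eq_sub]
    have hdiff : (∫ s in (0:ℝ)..m, f (Real.exp (σ * s) • v s))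
          - ∫ s in (0:ℝ)..m, f (Real.exp (σ * s) • w s)
        = ∫ s in (0:ℝ)..m, (f (Real.exp (σ * s) • v s) - f (Real.exp (σ * s) • w s)) :=
      (intervalIntegral.integral_sub ((hIntCont v).intervalIntegrable 0 m)
        ((hIntCont w).intervalIntegrable 0 m)).symm
    have hpt : ∀ s, ‖f (Real.exp (σ * s) • v s) - f (Real.exp (σ * s) • w s)‖
        ≤ L * dist v w * Real.exp (σ * s) := by
      intro s
      have h1 := hlip (Real.exp (σ * s) • v s) (Real.exp (σ * s) • w s)
      have h2 : Real.exp (σ * s) • v s - Real.exp (σ * s) • w s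
          = Real.exp (σ * s) • (v s - w s) := (smul_sub _ _ _).symm
      have h3 : ‖v s - w s‖ ≤ dist v w := by
        rw [← dist_eq_norm]; exact v.dist_coe_le_dist s
      have h4 : ‖Real.exp (σ * s) • (v s - w s)‖ = Real.exp (σ * s) * ‖v s - w s‖ := by
        rw [norm_smul, Real.norm_eq_abs, abs_of_pos (Real.exp_pos _)]
      have h5 := mul_le_mul_of_nonneg_right (mul_le_mul_of_nonneg_left h3 hL.le)
        (Real.exp_pos (σ * s)).le
      calc ‖f (Real.exp (σ * s) • v s) - f (Real.exp (σ * s) • w s)‖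
          ≤ L * (Real.exp (σ * s) * ‖v s - w s‖) := by rw [← h4, ← h2]; exact h1
        _ = L * ‖v s - w s‖ * Real.exp (σ * s) := by ring
        _ ≤ L * dist v w * Real.exp (σ * s) := h5
    have hIle := key_int_bound (g := fun s =>
        f (Real.exp (σ * s) • v s) - f (Real.exp (σ * s) • w s))
      hσ0 hm0 (mul_nonneg hL.le dist_nonneg) hpt
    have hfin := hEfact m hm0 (L * dist v w) (mul_nonneg hL.le dist_nonneg)
    calc ‖G v t - G w t‖
        = Real.exp (-(σ * m)) * ‖∫ s in (0:ℝ)..m,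
            (f (Real.exp (σ * s) • v s) - f (Real.exp (σ * s) • w s))‖ := by
          rw [hsub, hdiff, norm_smul, Real.norm_eq_abs, abs_of_pos (Real.exp_pos _)]
      _ ≤ Real.exp (-(σ * m)) * (L * dist v w * ((Real.exp (σ * m) - 1) / σ)) :=
          mul_le_mul_of_nonneg_left hIle (Real.exp_pos _).le
      _ ≤ L * dist v w / σ := hfin
      _ = L / σ * dist v w := by ring
  have hcontract : ContractingWith (Real.toNNReal (L / σ)) Φ := by
    constructor
    · have h1 : L / σ < 1 := (div_lt_one hσ0).2 hLσ
      exact_mod_cast Real.toNNReal_lt_one.2 h1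
    · apply LipschitzWith.of_dist_le_mul
      intro v w
      have : (Real.toNNReal (L / σ) : ℝ) = L / σ :=
        Real.coe_toNNReal _ (div_nonneg hL.le hσ0.le)
      rw [this]
      exact hlipΦ v w
  refine ⟨ContractingWith.fixedPoint Φ hcontract, fun t => ?_⟩
  conv_lhs => rw [← hcontract.fixedPoint_isFixedPt]
  exact hΦcoe _ t

section
variable {H : Type*} [NormedAddCommGroup H] [InnerProductSpace ℂ H] [CompleteSpace H]

lemma wint_bound {H : Type*} [NormedAddCommGroup H] [InnerProductSpace ℂ H] [CompleteSpace H]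
    {ϱ : ℝ} (hϱ0 : 0 < ϱ) {h : ℝ → H}
    (hmeas : AEStronglyMeasurable h volume)
    (hint : Integrable (fun t : ℝ => ‖h t‖ ^ 2 * Real.exp (-2 * ϱ * t))) :
    ∃ K : ℝ, 0 ≤ K ∧ ∀ t : ℝ, IntegrableOn (fun s => ‖h s‖) (Iio t)
      ∧ (∫ s in Iio t, ‖h s‖) ≤ K * Real.exp (ϱ * t) := by
  set A := ∫ s : ℝ, ‖h s‖ ^ 2 * Real.exp (-2 * ϱ * s) with hA
  have hA0 : 0 ≤ A := integral_nonneg (fun s => by positivity)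
  refine ⟨A/2 + 1/(4*ϱ), by positivity, fun t => ?_⟩
  set B : ℝ → ℝ := fun s => (Real.exp (ϱ*t) * (‖h s‖ ^ 2 * Real.exp (-2*ϱ*s))
      + Real.exp (-(ϱ*t)) * Real.exp ((2*ϱ)*s))/2 with hB
  have hBint : IntegrableOn B (Iio t) := by
    apply Integrable.div_const
    exact ((hint.integrableOn).const_mul _).add
      ((exp_integrableOn_Iio (2*ϱ) t (by linarith)).const_mul _)
  have hpb : ∀ s, ‖h s‖ ≤ B s := by
    intro s
    set c := ϱ*t - 2*ϱ*s with hc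
    have e1 : Real.exp (ϱ*t) * Real.exp (-2*ϱ*s) = Real.exp (c/2) * Real.exp (c/2) := by
      rw [← Real.exp_add, ← Real.exp_add]; congr 1; rw [hc]; ring
    have e2 : Real.exp (-(ϱ*t)) * Real.exp ((2*ϱ)*s)
        = Real.exp (-(c/2)) * Real.exp (-(c/2)) := by
      rw [← Real.exp_add, ← Real.exp_add]; congr 1; rw [hc]; ring
    have e3 : Real.exp (c/2) * Real.exp (-(c/2)) = 1 := by rw [← Real.exp_add]; simp
    have e4 := sq_nonneg (Real.exp (c/2) * ‖h s‖ - Real.exp (-(c/2)))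
    rw [hB]
    nlinarith [norm_nonneg (h s), Real.exp_pos (c/2), Real.exp_pos (-(c/2))]
  have hImeas : IntegrableOn (fun s => ‖h s‖) (Iio t) :=
    Integrable.mono' hBint hmeas.norm.restrict
      (ae_of_all _ fun s => by rw [norm_norm]; exact hpb s)
  refine ⟨hImeas, ?_⟩
  set S1 := ∫ s in Iio t, ‖h s‖ ^ 2 * Real.exp (-2*ϱ*s) with hS1def
  have hS1 : S1 ≤ A := setIntegral_le_integral hint (ae_of_all _ fun s => by positivity)
  have hS2 : ∫ s in Iio t, Real.exp ((2*ϱ)*s) = Real.exp ((2*ϱ)*t)/(2*ϱ) :=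
    exp_integral_Iio _ _ (by linarith)
  have hBval : ∫ s in Iio t, B s
      = (Real.exp (ϱ*t) * S1 + Real.exp (-(ϱ*t)) * (Real.exp ((2*ϱ)*t)/(2*ϱ)))/2 := by
    rw [hB]
    rw [MeasureTheory.integral_div, MeasureTheory.integral_add ((hint.integrableOn).const_mul _)
      ((exp_integrableOn_Iio (2*ϱ) t (by linarith)).const_mul _),
      MeasureTheory.integral_const_mul, MeasureTheory.integral_const_mul, hS2]
  have hee : Real.exp (-(ϱ*t)) * Real.exp ((2*ϱ)*t) = Real.exp (ϱ*t) := by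
    rw [← Real.exp_add]; congr 1; ring
  calc ∫ s in Iio t, ‖h s‖ ≤ ∫ s in Iio t, B s := integral_mono hImeas hBint hpb
    _ = (Real.exp (ϱ*t) * S1 + Real.exp (-(ϱ*t)) * (Real.exp ((2*ϱ)*t)/(2*ϱ)))/2 := hBval
    _ = (Real.exp (ϱ*t) * S1 + (Real.exp (-(ϱ*t)) * Real.exp ((2*ϱ)*t))/(2*ϱ))/2 := by ring
    _ = (Real.exp (ϱ*t) * S1 + Real.exp (ϱ*t)/(2*ϱ))/2 := by rw [hee]
    _ ≤ (Real.exp (ϱ*t) * A + Real.exp (ϱ*t)/(2*ϱ))/2 := by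
        have := mul_le_mul_of_nonneg_left hS1 (Real.exp_pos (ϱ*t)).le; linarith
    _ = (A/2 + 1/(4*ϱ)) * Real.exp (ϱ*t) := by field_simp; ring

end
end AuxStmt14

/-- Initial value problem in integrated form with Dirac source at 0. -/
theorem stmt14 {H : Type*} [NormedAddCommGroup H] [InnerProductSpace ℂ H] [CompleteSpace H]
    (L : ℝ) (hL : 0 < L) (f : H → H)
    (hlip : ∀ x y : H, ‖f x - f y‖ ≤ L * ‖x - y‖) (hf0 : f 0 = 0)
    (ϱ : ℝ) (hϱ : L < ϱ) (u₀ : H) :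
    ∃ u : ℝ → H, memW ϱ u ∧
      (∀ᵐ t : ℝ ∂volume,
        u t = Set.indicator (Set.Ici (0 : ℝ)) (fun _ => u₀) t + ∫ s in Set.Iio t, f (u s)) ∧
      (∀ᵐ t : ℝ ∂volume, t < 0 → u t = 0) ∧
      (∃ w : ℝ → H, Continuous w ∧
        (∀ᵐ t : ℝ ∂volume, w t = u t - Set.indicator (Set.Ici (0 : ℝ)) (fun _ => u₀) t) ∧
        w 0 = 0) ∧
      (∀ u' : ℝ → H, memW ϱ u' →
        (∀ᵐ t : ℝ ∂volume,
          u' t = Set.indicator (Set.Ici (0 : ℝ)) (fun _ => u₀) t + ∫ s in Set.Iio t, f (u' s)) →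
        u' =ᵐ[volume] u) := by
  have hϱ0 : (0:ℝ) < ϱ := hL.trans hϱ
  have hfc : Continuous f := by
    have hlw : LipschitzWith (Real.toNNReal L) f := by
      apply LipschitzWith.of_dist_le_mul
      intro x y
      rw [dist_eq_norm, dist_eq_norm]
      simpa [Real.coe_toNNReal L hL.le] using hlip x y
    exact hlw.continuous
  have hfnorm : ∀ x : H, ‖f x‖ ≤ L * ‖x‖ := fun x => by simpa [hf0] using hlip x 0
  set σ := (L + ϱ)/2 with hσdef
  have hσ0 : 0 < σ := by rw [hσdef]; linarith
  have hLσ : L < σ := by rw [hσdef]; linarith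
  have hσϱ : σ < ϱ := by rw [hσdef]; linarith
  obtain ⟨v, hv⟩ := exists_fixed L hL f hlip hf0 hfc σ hσ0 hLσ u₀
  set u : ℝ → H := fun t => if 0 ≤ t then Real.exp (σ * t) • v t else 0 with hu
  have hupos : ∀ t, 0 ≤ t → u t = Real.exp (σ * t) • v t := fun t ht => if_pos ht
  have huneg : ∀ t, t < 0 → u t = 0 := fun t ht => if_neg (not_le.2 ht)
  -- the integral equation on [0, ∞)
  have huEq : ∀ t, 0 ≤ t → u t = u₀ + ∫ s in (0:ℝ)..t, f (u s) := by
    intro t ht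
    have hmax : max t 0 = t := max_eq_left ht
    have h1 := hv t
    rw [hmax] at h1
    have h2 : ∫ s in (0:ℝ)..t, f (Real.exp (σ * s) • v s) = ∫ s in (0:ℝ)..t, f (u s) := by
      apply intervalIntegral.integral_congr
      intro s hs
      rw [uIcc_of_le ht] at hs
      show f (Real.exp (σ * s) • v s) = f (u s)
      rw [hupos s hs.1]
    have h4 : Real.exp (σ * t) * Real.exp (-(σ * t)) = 1 := by rw [← Real.exp_add]; simp
    rw [hupos t ht, h1, smul_smul, h4, one_smul, h2]
  -- the integrand as an indicator function
  have hgind : ∀ s, f (u s) = (Ici (0:ℝ)).indicator (fun s => f (Real.exp (σ * s) • v s)) s := by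
    intro s
    by_cases hs : 0 ≤ s
    · rw [Set.indicator_of_mem (mem_Ici.2 hs), hupos s hs]
    · rw [Set.indicator_of_notMem (by simpa using hs), huneg s (not_le.1 hs), hf0]
  have hgfun : (fun s => f (u s))
      = (Ici (0:ℝ)).indicator (fun s => f (Real.exp (σ * s) • v s)) := funext hgind
  have hGcont : Continuous (fun s => f (Real.exp (σ * s) • v s)) :=
    hfc.comp ((contExp σ).smul v.continuous)
  -- interval integrability of f ∘ u
  have hgII : ∀ a b : ℝ, IntervalIntegrable (fun s => f (u s)) volume a b := by
    intro a b
    rw [intervalIntegrable_iff, hgfun]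
    rw [IntegrableOn, integrable_indicator_iff measurableSet_Ici]
    rw [IntegrableOn, Measure.restrict_restrict measurableSet_Ici]
    exact (intervalIntegrable_iff.1 (hGcont.intervalIntegrable a b)).mono_set
      inter_subset_right
  -- integrability on half-lines
  have hgiOn : ∀ t : ℝ, IntegrableOn (fun s => f (u s)) (Iio t) := by
    intro t
    rw [hgfun, IntegrableOn, integrable_indicator_iff measurableSet_Ici]
    rw [IntegrableOn, Measure.restrict_restrict measurableSet_Ici]
    have h1 : Ici (0:ℝ) ∩ Iio t ⊆ Icc 0 t := fun s hs => ⟨hs.1, le_of_lt hs.2⟩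
    exact (hGcont.integrableOn_Icc).mono_set h1
  -- identification of the set integral on Iio with interval integrals
  have hIio : ∀ t : ℝ, (∫ s in Iio t, f (u s)) = ∫ s in (0:ℝ)..(max t 0), f (u s) := by
    intro t
    rcases le_or_gt t 0 with ht | ht
    · rw [max_eq_right ht]
      rw [intervalIntegral.integral_same]
      rw [hgfun, setIntegral_indicator measurableSet_Ici]
      have hempty : Iio t ∩ Ici (0:ℝ) = ∅ := by
        ext s
        simp only [mem_inter_iff, mem_Iio, mem_Ici, mem_empty_iff_false, iff_false, not_and]
        intro h1; linarith
      rw [hempty]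
      simp
    · rw [max_eq_left ht.le]
      rw [hgfun, setIntegral_indicator measurableSet_Ici]
      have h1 : Iio t ∩ Ici (0:ℝ) = Ico 0 t := by
        ext s
        simp only [mem_inter_iff, mem_Iio, mem_Ici, mem_Ico]
        exact ⟨fun h => ⟨h.2, h.1⟩, fun h => ⟨h.2, h.1⟩⟩
      rw [h1, MeasureTheory.integral_Ico_eq_integral_Ioo,
        ← MeasureTheory.integral_Ioc_eq_integral_Ioo,
        ← intervalIntegral.integral_of_le ht.le, ← hgfun]
      apply intervalIntegral.integral_congr
      intro s hs
      rw [uIcc_of_le ht.le] at hs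
      show f (Real.exp (σ * s) • v s) = f (u s)
      rw [hupos s hs.1]
  -- the pointwise equation, for every t
  have heqAll : ∀ t, u t = (Ici (0:ℝ)).indicator (fun _ => u₀) t + ∫ s in Iio t, f (u s) := by
    intro t
    rcases le_or_gt 0 t with ht | ht
    · rw [hIio t, max_eq_left ht, Set.indicator_of_mem (mem_Ici.2 ht)]
      exact huEq t ht
    · rw [huneg t ht, Set.indicator_of_notMem (by simpa using not_le.2 ht), hIio t,
        max_eq_right ht.le, intervalIntegral.integral_same, add_zero]
  -- measurability of u
  have humeas : AEStronglyMeasurable u volume := by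
    have h1 : u = (Ici (0:ℝ)).indicator (fun t => Real.exp (σ * t) • v t) := by
      funext t
      by_cases ht : 0 ≤ t
      · rw [hupos t ht, Set.indicator_of_mem (mem_Ici.2 ht)]
      · rw [huneg t (not_le.1 ht), Set.indicator_of_notMem (by simpa using ht)]
    rw [h1]
    exact (((contExp σ).smul v.continuous).stronglyMeasurable.indicator
      measurableSet_Ici).aestronglyMeasurable
  -- weighted square-integrability of u
  have huint : Integrable (fun t => ‖u t‖ ^ 2 * Real.exp (-2 * ϱ * t)) := by
    apply Integrable.mono'
      (g := (Ici (0:ℝ)).indicator fun t => ‖v‖ ^ 2 * Real.exp ((2*(σ-ϱ)) * t))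
    · rw [integrable_indicator_iff measurableSet_Ici]
      apply Integrable.const_mul
      have h2 : (fun t : ℝ => Real.exp ((2*(σ-ϱ))*t)) = fun t => Real.exp (-(2*(ϱ-σ))*t) := by
        funext t; congr 1; ring
      have h3 : IntegrableOn (fun t : ℝ => Real.exp (-(2*(ϱ-σ))*t)) (Ioi 0) :=
        exp_neg_integrableOn_Ioi 0 (by linarith)
      have h4 : IntegrableOn (fun t : ℝ => Real.exp ((2*(σ-ϱ))*t)) (Ioi 0) := by
        rw [h2]; exact h3
      exact (integrableOn_Ici_iff_integrableOn_Ioi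
        (f := fun t : ℝ => Real.exp ((2*(σ-ϱ))*t)) (by simp)).2 h4
    · have h3 := humeas.norm
      have h4 : AEStronglyMeasurable (fun t => ‖u t‖ * ‖u t‖ * Real.exp (-2 * ϱ * t)) volume :=
        (h3.mul h3).mul (contExp (-2*ϱ)).aestronglyMeasurable
      apply h4.congr
      filter_upwards with t
      rw [pow_two]
    · filter_upwards with t
      rw [Real.norm_of_nonneg (by positivity)]
      by_cases ht : 0 ≤ t
      · rw [Set.indicator_of_mem (mem_Ici.2 ht)]
        have h1 : ‖u t‖ ≤ ‖v‖ * Real.exp (σ * t) := by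
          rw [hupos t ht, norm_smul, Real.norm_eq_abs, abs_of_pos (Real.exp_pos _)]
          have := v.norm_coe_le_norm t
          nlinarith [Real.exp_pos (σ * t)]
        have he : Real.exp (σ*t) * Real.exp (σ*t) * Real.exp (-2*ϱ*t)
            = Real.exp ((2*(σ-ϱ))*t) := by
          rw [← Real.exp_add, ← Real.exp_add]; congr 1; ring
        calc ‖u t‖ ^ 2 * Real.exp (-2*ϱ*t)
            ≤ (‖v‖ * Real.exp (σ*t)) ^ 2 * Real.exp (-2*ϱ*t) := by
              have := pow_le_pow_left₀ (norm_nonneg (u t)) h1 2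
              nlinarith [Real.exp_pos (-2*ϱ*t)]
          _ = ‖v‖ ^ 2 * (Real.exp (σ*t) * Real.exp (σ*t) * Real.exp (-2*ϱ*t)) := by ring
          _ = ‖v‖ ^ 2 * Real.exp ((2*(σ-ϱ))*t) := by rw [he]
      · rw [Set.indicator_of_notMem (by simpa using ht), huneg t (not_le.1 ht)]
        simp
  refine ⟨u, ⟨humeas, huint⟩, ae_of_all _ heqAll, ae_of_all _ huneg, ?_, ?_⟩
  · -- the continuous representative
    refine ⟨fun t => ∫ s in (0:ℝ)..(max t 0), f (u s), ?_, ?_, ?_⟩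
    · exact (intervalIntegral.continuous_primitive hgII 0).comp
        (continuous_id.max continuous_const)
    · filter_upwards with t
      rw [heqAll t, hIio t, add_sub_cancel_left]
    · show (∫ s in (0:ℝ)..(max 0 0), f (u s)) = 0
      rw [max_self, intervalIntegral.integral_same]
  · -- uniqueness
    intro u' hmem' heq'
    obtain ⟨hmeas', hint'⟩ := hmem'
    -- weighted square integrability of the difference
    have hdsq : Integrable (fun s : ℝ => ‖u' s - u s‖ ^ 2 * Real.exp (-2 * ϱ * s)) := by
      apply Integrable.mono' (g := fun s => 2 * (‖u' s‖ ^ 2 * Real.exp (-2*ϱ*s))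
        + 2 * (‖u s‖ ^ 2 * Real.exp (-2*ϱ*s)))
      · exact (hint'.const_mul 2).add (huint.const_mul 2)
      · have h3 := (hmeas'.sub humeas).norm
        have h4 : AEStronglyMeasurable
            (fun s => ‖u' s - u s‖ * ‖u' s - u s‖ * Real.exp (-2 * ϱ * s)) volume :=
          (h3.mul h3).mul (contExp (-2*ϱ)).aestronglyMeasurable
        apply h4.congr
        filter_upwards with s
        rw [pow_two]
      · filter_upwards with s
        rw [Real.norm_of_nonneg (by positivity)]
        have hsq : ‖u' s - u s‖ ^ 2 ≤ 2*‖u' s‖ ^ 2 + 2*‖u s‖ ^ 2 := by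
          nlinarith [norm_sub_le (u' s) (u s), sq_nonneg (‖u' s‖ - ‖u s‖),
            norm_nonneg (u' s - u s), norm_nonneg (u' s), norm_nonneg (u s)]
        nlinarith [mul_le_mul_of_nonneg_right hsq (Real.exp_pos (-2*ϱ*s)).le]
    obtain ⟨K, hK0, hKd⟩ := wint_bound hϱ0 (hmeas'.sub humeas) hdsq
    obtain ⟨K', hK'0, hKu'⟩ := wint_bound hϱ0 hmeas' hint'
    obtain ⟨K'', hK''0, hKu⟩ := wint_bound hϱ0 humeas huint
    -- integrability of f ∘ u' and f ∘ u on half-lines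
    have hfu'int : ∀ t : ℝ, IntegrableOn (fun s => f (u' s)) (Iio t) := by
      intro t
      apply Integrable.mono' (((hKu' t).1).const_mul L)
        ((hfc.comp_aestronglyMeasurable hmeas').restrict)
      exact ae_of_all _ fun s => hfnorm (u' s)
    have hfuint : ∀ t : ℝ, IntegrableOn (fun s => f (u s)) (Iio t) := by
      intro t
      apply Integrable.mono' (((hKu t).1).const_mul L)
        ((hfc.comp_aestronglyMeasurable humeas).restrict)
      exact ae_of_all _ fun s => hfnorm (u s)
    -- a.e. pointwise bound
    have hd_ae : ∀ᵐ t : ℝ ∂volume, ‖u' t - u t‖ ≤ L * ∫ s in Iio t, ‖u' s - u s‖ := by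
      filter_upwards [heq'] with t h1
      have h3 : u' t - u t = ∫ s in Iio t, (f (u' s) - f (u s)) := by
        rw [h1, heqAll t, add_sub_add_left_eq_sub,
          ← MeasureTheory.integral_sub (hfu'int t) (hfuint t)]
      calc ‖u' t - u t‖ = ‖∫ s in Iio t, (f (u' s) - f (u s))‖ := by rw [h3]
        _ ≤ ∫ s in Iio t, ‖f (u' s) - f (u s)‖ := norm_integral_le_integral_norm _
        _ ≤ ∫ s in Iio t, L * ‖u' s - u s‖ :=
            integral_mono ((hfu'int t).sub (hfuint t)).norm ((hKd t).1.const_mul L)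
              (fun s => hlip _ _)
        _ = L * ∫ s in Iio t, ‖u' s - u s‖ := MeasureTheory.integral_const_mul _ _
    -- iteration
    have hiter : ∀ n : ℕ, ∀ t : ℝ,
        (∫ s in Iio t, ‖u' s - u s‖) ≤ (L/ϱ)^n * (K * Real.exp (ϱ * t)) := by
      intro n
      induction n with
      | zero => intro t; simpa using (hKd t).2
      | succ n ih =>
        intro t
        have hmono : ∀ᵐ s ∂(volume.restrict (Iio t)),
            ‖u' s - u s‖ ≤ L * ((L/ϱ)^n * (K * Real.exp (ϱ * s))) := by
          refine ae_restrict_of_ae ?_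
          filter_upwards [hd_ae] with s hs
          exact hs.trans (mul_le_mul_of_nonneg_left (ih s) hL.le)
        have hexpint : IntegrableOn (fun s => L * ((L/ϱ)^n * (K * Real.exp (ϱ * s)))) (Iio t) := by
          apply Integrable.const_mul
          apply Integrable.const_mul
          exact (exp_integrableOn_Iio ϱ t hϱ0).const_mul K
        calc (∫ s in Iio t, ‖u' s - u s‖)
            ≤ ∫ s in Iio t, L * ((L/ϱ)^n * (K * Real.exp (ϱ * s))) :=
              integral_mono_ae (hKd t).1 hexpint hmono
          _ = L * ((L/ϱ)^n * (K * ∫ s in Iio t, Real.exp (ϱ * s))) := by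
              rw [MeasureTheory.integral_const_mul, MeasureTheory.integral_const_mul,
                MeasureTheory.integral_const_mul]
          _ = L * ((L/ϱ)^n * (K * (Real.exp (ϱ * t)/ϱ))) := by
              rw [exp_integral_Iio ϱ t hϱ0]
          _ = (L/ϱ)^(n+1) * (K * Real.exp (ϱ * t)) := by
              rw [pow_succ]; field_simp
    have hI0 : ∀ t : ℝ, (∫ s in Iio t, ‖u' s - u s‖) = 0 := by
      intro t
      have htend : Filter.Tendsto (fun n : ℕ => (L/ϱ)^n * (K * Real.exp (ϱ * t))) Filter.atTop (nhds 0) := by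
        have h1 : Filter.Tendsto (fun n : ℕ => (L/ϱ)^n) Filter.atTop (nhds 0) :=
          tendsto_pow_atTop_nhds_zero_of_lt_one (by positivity) ((div_lt_one hϱ0).2 hϱ)
        simpa using h1.mul_const (K * Real.exp (ϱ * t))
      have hle : (∫ s in Iio t, ‖u' s - u s‖) ≤ 0 :=
        ge_of_tendsto htend (Filter.Eventually.of_forall fun n => hiter n t)
      exact le_antisymm hle (integral_nonneg fun s => norm_nonneg _)
    have hz : ∀ n : ℕ, ∀ᵐ s : ℝ ∂volume, s ∈ Iio (n:ℝ) → u' s = u s := by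
      intro n
      have h1 := (MeasureTheory.integral_eq_zero_iff_of_nonneg
        (fun s => norm_nonneg (u' s - u s)) (hKd (n:ℝ)).1).1 (hI0 (n:ℝ))
      have h2 := (ae_restrict_iff' measurableSet_Iio).1 h1
      filter_upwards [h2] with s hs hsn
      have h3 := hs hsn
      simp only [Pi.zero_apply] at h3
      rw [← sub_eq_zero]
      exact norm_eq_zero.1 h3
    have hall : ∀ᵐ s : ℝ ∂volume, ∀ n : ℕ, s ∈ Iio (n:ℝ) → u' s = u s := ae_all_iff.2 hz
    filter_upwards [hall] with s hs
    obtain ⟨n, hn⟩ := exists_nat_gt s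
    exact hs n hn
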